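/- Let p be a prime number and let ℤ_p be the ring of p-adic integers with the metric induced by the p-adic norm. Let P be a polynomial with coefficients in ℤ_p; then x ↦ P(x) is a continuous self-map of the compact metric space ℤ_p. Any oscillating sequence (c_n)_{n≥1} satisfying the growth condition is linearly disjoint from the flow (ℤ_p, P): for every continuous function f : ℤ_p → ℂ and every x ∈ ℤ_p, (1/N)·Σ_{n=1}^N c_n f(Pⁿ(x)) → 0 as N → ∞, where Pⁿ denotes the n-th iterate of x ↦ P(x). -/

import Mathlib

open Filter Finset Topology
open scoped Classical

/-- A sequence of complex numbers is *oscillating* if its twisted Cesàro means tend to zero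
for every frequency `t ∈ [0,1)`. -/
def Oscillating (c : ℕ → ℂ) : Prop :=
  ∀ t : ℝ, 0 ≤ t → t < 1 →
    Filter.Tendsto
      (fun N : ℕ => (N : ℂ)⁻¹ * ∑ n ∈ Finset.Icc 1 N,
        c n * Complex.exp (-(2 * Real.pi * Complex.I * n * t)))
      Filter.atTop (nhds 0)

/-- The growth condition: `∑_{n=1}^N |c n|^λ = O(N)` for some `λ > 1`. -/
def GrowthCondition (c : ℕ → ℂ) : Prop :=
  ∃ lam : ℝ, 1 < lam ∧ ∃ C : ℝ, ∀ N : ℕ,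
    ∑ n ∈ Finset.Icc 1 N, ‖c n‖ ^ lam ≤ C * N

/-- Upper density of a set of natural numbers. -/
noncomputable def upperDensity (E : Set ℕ) : ℝ :=
  Filter.limsup (fun N : ℕ => (((Finset.Icc 1 N).filter (fun n => n ∈ E)).card : ℝ) / N)
    Filter.atTop

/-- A flow is mean-L-stable (MLS). -/
def IsMLS {X : Type*} [PseudoMetricSpace X] (T : X → X) : Prop :=
  ∀ ε : ℝ, 0 < ε → ∃ δ : ℝ, 0 < δ ∧ ∀ x y : X, dist x y < δ →
    upperDensity {n : ℕ | ε ≤ dist (T^[n] x) (T^[n] y)} < ε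

/-- The restriction of a flow to a subset `K` is mean-L-stable. -/
def IsMLSOn {X : Type*} [PseudoMetricSpace X] (T : X → X) (K : Set X) : Prop :=
  ∀ ε : ℝ, 0 < ε → ∃ δ : ℝ, 0 < δ ∧ ∀ x ∈ K, ∀ y ∈ K, dist x y < δ →
    upperDensity {n : ℕ | ε ≤ dist (T^[n] x) (T^[n] y)} < ε

/-- A minimal subset of a flow: nonempty, closed, invariant, and every forward orbit is dense. -/
def MinimalSubset {X : Type*} [TopologicalSpace X] (T : X → X) (K : Set X) : Prop :=
  K.Nonempty ∧ IsClosed K ∧ Set.MapsTo T K K ∧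
    ∀ x ∈ K, K ⊆ closure (Set.range fun n : ℕ => T^[n] x)

/-- A flow is minimally mean-L-stable (MMLS) if its restriction to every minimal subset is MLS. -/
def IsMMLS {X : Type*} [PseudoMetricSpace X] (T : X → X) : Prop :=
  ∀ K : Set X, MinimalSubset T K → IsMLSOn T K

/-- `x` is mean attracted to `K`. -/
def MeanAttracted {X : Type*} [PseudoMetricSpace X] (T : X → X) (x : X) (K : Set X) : Prop :=
  ∀ ε : ℝ, 0 < ε → ∃ z ∈ K,
    Filter.limsup
      (fun N : ℕ => (N : ℝ)⁻¹ * ∑ n ∈ Finset.Icc 1 N, dist (T^[n] x) (T^[n] z))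
      Filter.atTop < ε

/-- A flow is minimally mean attractable (MMA). -/
def IsMMA {X : Type*} [PseudoMetricSpace X] (T : X → X) : Prop :=
  ∀ x : X, ∃ K : Set X, MinimalSubset T K ∧ MeanAttracted T x K

/-- A sequence is linearly disjoint from a flow. -/
def LinearlyDisjoint {X : Type*} [TopologicalSpace X] (c : ℕ → ℂ) (T : X → X) : Prop :=
  ∀ f : C(X, ℂ), ∀ x : X,
    Filter.Tendsto
      (fun N : ℕ => (N : ℂ)⁻¹ * ∑ n ∈ Finset.Icc 1 N, c n * f (T^[n] x))
      Filter.atTop (nhds 0)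

/-- An equicontinuous flow. -/
def EquicontinuousFlow {X : Type*} [PseudoMetricSpace X] (T : X → X) : Prop :=
  ∀ ε : ℝ, 0 < ε → ∃ δ : ℝ, 0 < δ ∧ ∀ x y : X, dist x y < δ →
    ∀ n : ℕ, dist (T^[n] x) (T^[n] y) < ε

private lemma dft_reconstruct (q : ℕ) (hq : 0 < q) (h : ℕ → ℂ) (hper : Function.Periodic h q)
    (n : ℕ) :
    h n = ∑ j ∈ Finset.range q,
      ((q : ℂ)⁻¹ * ∑ a ∈ Finset.range q,
          h a * Complex.exp (-(2 * Real.pi * Complex.I * j * a / q)))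
        * Complex.exp (2 * Real.pi * Complex.I * j * n / q) := by
  have hq0 : (q : ℂ) ≠ 0 := Nat.cast_ne_zero.mpr hq.ne'
  set z : ℕ → ℂ := fun a => Complex.exp (2 * Real.pi * Complex.I * ((n : ℂ) - a) / q) with hz
  have hprod : ∀ j a : ℕ, Complex.exp (-(2 * Real.pi * Complex.I * j * a / q)) *
      Complex.exp (2 * Real.pi * Complex.I * j * n / q) = z a ^ j := by
    intro j a
    rw [hz, ← Complex.exp_add, ← Complex.exp_nat_mul]
    congr 1
    field_simp
    ring
  have hsum : ∀ a ∈ Finset.range q, ∑ j ∈ Finset.range q, z a ^ j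
      = if a = n % q then (q : ℂ) else 0 := by
    intro a ha
    by_cases hcase : a = n % q
    · have hnd : (n : ℂ) = (q : ℂ) * ((n / q : ℕ) : ℂ) + ((n % q : ℕ) : ℂ) := by
        exact_mod_cast congrArg (fun m : ℕ => (m : ℂ)) (Nat.div_add_mod n q).symm
      have hz1 : z a = 1 := by
        rw [hz, Complex.exp_eq_one_iff]
        refine ⟨Int.ofNat (n / q), ?_⟩
        rw [hcase]
        rw [Int.ofNat_eq_natCast, Int.cast_natCast]
        rw [div_eq_iff hq0]
        linear_combination (2 * (Real.pi : ℂ) * Complex.I) * hnd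
      rw [if_pos hcase]
      simp [hz1]
    · have hzne : z a ≠ 1 := by
        intro hcon
        rw [hz] at hcon
        rw [Complex.exp_eq_one_iff] at hcon
        obtain ⟨k, hk⟩ := hcon
        have h2 : (2 * (Real.pi : ℂ) * Complex.I) ≠ 0 := by
          simp [Real.pi_ne_zero, Complex.I_ne_zero]
        have hk' : (n : ℂ) = (a : ℂ) + (q : ℂ) * k := by
          field_simp at hk
          have h3 : 2 * (Real.pi : ℂ) * Complex.I * ((n : ℂ) - a)
              = 2 * (Real.pi : ℂ) * Complex.I * ((a : ℂ) + (q : ℂ) * k - a) := by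
            linear_combination (2 * (Real.pi : ℂ) * Complex.I) * hk
          have h4 := mul_left_cancel₀ h2 h3
          linear_combination h4
        have hz2 : (n : ℤ) = (a : ℤ) + (q : ℤ) * k := by exact_mod_cast hk'
        have ha' : (a : ℤ) < (q : ℤ) := by exact_mod_cast Finset.mem_range.mp ha
        have h5 : (a : ℤ) = (n : ℤ) % (q : ℤ) := by
          rw [hz2, Int.add_mul_emod_self_left,
            Int.emod_eq_of_lt (Int.ofNat_nonneg a) ha']
        have h6 : (a : ℤ) = ((n % q : ℕ) : ℤ) := by
          rw [h5]; push_cast; ring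
        exact hcase (by exact_mod_cast h6)
      have hzq : z a ^ q = 1 := by
        rw [hz, ← Complex.exp_nat_mul, Complex.exp_eq_one_iff]
        refine ⟨(n : ℤ) - a, ?_⟩
        push_cast
        field_simp
      rw [geom_sum_eq hzne, hzq]
      simp [hcase]
  symm
  calc ∑ j ∈ Finset.range q,
      ((q : ℂ)⁻¹ * ∑ a ∈ Finset.range q,
          h a * Complex.exp (-(2 * Real.pi * Complex.I * j * a / q)))
        * Complex.exp (2 * Real.pi * Complex.I * j * n / q)
      = ∑ j ∈ Finset.range q, ∑ a ∈ Finset.range q, (q : ℂ)⁻¹ * (h a * z a ^ j) := by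
        refine Finset.sum_congr rfl fun j _ => ?_
        rw [mul_assoc, Finset.sum_mul, Finset.mul_sum]
        exact Finset.sum_congr rfl fun a _ => by rw [mul_assoc, hprod j a]
    _ = ∑ a ∈ Finset.range q, ∑ j ∈ Finset.range q, (q : ℂ)⁻¹ * (h a * z a ^ j) :=
        Finset.sum_comm
    _ = ∑ a ∈ Finset.range q, (q : ℂ)⁻¹ * (h a * ∑ j ∈ Finset.range q, z a ^ j) := by
        refine Finset.sum_congr rfl fun a _ => ?_
        rw [Finset.mul_sum, Finset.mul_sum]
    _ = ∑ a ∈ Finset.range q, (q : ℂ)⁻¹ * (h a * (if a = n % q then (q : ℂ) else 0)) := by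
        refine Finset.sum_congr rfl fun a ha => by rw [hsum a ha]
    _ = h (n % q) := by
        simp only [mul_ite, mul_zero, Finset.sum_ite_eq', Finset.mem_range]
        rw [if_pos (Nat.mod_lt n hq)]
        field_simp
    _ = h n := hper.map_mod_nat n

private lemma exp_freq (q j : ℕ) (hq : 0 < q) (hj : j < q) (n : ℕ) :
    Complex.exp (-(2 * Real.pi * Complex.I * n * ((((q - j) % q : ℕ) : ℝ) / q : ℝ)))
      = Complex.exp (2 * Real.pi * Complex.I * j * n / q) := by
  have hq0 : (q : ℂ) ≠ 0 := Nat.cast_ne_zero.mpr hq.ne'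
  rw [Complex.exp_eq_exp_iff_exists_int]
  by_cases hj0 : j = 0
  · refine ⟨0, ?_⟩
    subst hj0
    simp [Nat.mod_self]
  · refine ⟨-(n : ℤ), ?_⟩
    have h1 : (q - j) % q = q - j := Nat.mod_eq_of_lt (by omega)
    have h2 : ((q - j : ℕ) : ℝ) = (q : ℝ) - j := by
      rw [Nat.cast_sub hj.le]
    rw [h1]
    push_cast [h2]
    field_simp
    ring

private lemma periodic_avg_zero (c : ℕ → ℂ) (hosc : Oscillating c) (q : ℕ) (hq : 0 < q)
    (h : ℕ → ℂ) (hper : Function.Periodic h q) :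
    Filter.Tendsto (fun N : ℕ => (N : ℂ)⁻¹ * ∑ n ∈ Finset.Icc 1 N, c n * h n)
      Filter.atTop (nhds 0) := by
  classical
  set b : ℕ → ℂ := fun j => (q : ℂ)⁻¹ * ∑ a ∈ Finset.range q,
    h a * Complex.exp (-(2 * Real.pi * Complex.I * j * a / q)) with hb
  have hswap : ∀ N : ℕ, (N : ℂ)⁻¹ * ∑ n ∈ Finset.Icc 1 N, c n * h n
      = ∑ j ∈ Finset.range q, b j * ((N : ℂ)⁻¹ * ∑ n ∈ Finset.Icc 1 N,
          c n * Complex.exp (2 * Real.pi * Complex.I * j * n / q)) := by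
    intro N
    calc (N : ℂ)⁻¹ * ∑ n ∈ Finset.Icc 1 N, c n * h n
        = ∑ n ∈ Finset.Icc 1 N, ∑ j ∈ Finset.range q,
            (N : ℂ)⁻¹ * (c n * (b j * Complex.exp (2 * Real.pi * Complex.I * j * n / q))) := by
          rw [Finset.mul_sum]
          refine Finset.sum_congr rfl fun n _ => ?_
          rw [dft_reconstruct q hq h hper n, Finset.mul_sum, Finset.mul_sum]
      _ = ∑ j ∈ Finset.range q, ∑ n ∈ Finset.Icc 1 N,
            (N : ℂ)⁻¹ * (c n * (b j * Complex.exp (2 * Real.pi * Complex.I * j * n / q))) :=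
          Finset.sum_comm
      _ = ∑ j ∈ Finset.range q, b j * ((N : ℂ)⁻¹ * ∑ n ∈ Finset.Icc 1 N,
            c n * Complex.exp (2 * Real.pi * Complex.I * j * n / q)) := by
          refine Finset.sum_congr rfl fun j _ => ?_
          rw [Finset.mul_sum, Finset.mul_sum]
          exact Finset.sum_congr rfl fun n _ => by ring
  have hmain : Filter.Tendsto (fun N : ℕ => ∑ j ∈ Finset.range q,
      b j * ((N : ℂ)⁻¹ * ∑ n ∈ Finset.Icc 1 N,
        c n * Complex.exp (2 * Real.pi * Complex.I * j * n / q)))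
      Filter.atTop (nhds 0) := by
    have : Filter.Tendsto (fun N : ℕ => ∑ j ∈ Finset.range q,
        b j * ((N : ℂ)⁻¹ * ∑ n ∈ Finset.Icc 1 N,
          c n * Complex.exp (2 * Real.pi * Complex.I * j * n / q)))
        Filter.atTop (nhds (∑ j ∈ Finset.range q, b j * 0)) := by
      refine tendsto_finset_sum _ fun j hj => ?_
      have hjq : j < q := Finset.mem_range.mp hj
      have hq0 : (0 : ℝ) < q := by exact_mod_cast hq
      have ht0 : (0 : ℝ) ≤ (((q - j) % q : ℕ) : ℝ) / q := by positivity
      have ht1 : (((q - j) % q : ℕ) : ℝ) / q < 1 := by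
        rw [div_lt_one hq0]
        exact_mod_cast Nat.mod_lt _ hq
      have hoscj := hosc _ ht0 ht1
      have hoscj' : Filter.Tendsto
          (fun N : ℕ => (N : ℂ)⁻¹ * ∑ n ∈ Finset.Icc 1 N,
            c n * Complex.exp (2 * Real.pi * Complex.I * j * n / q))
          Filter.atTop (nhds 0) := by
        refine hoscj.congr fun N => ?_
        refine congrArg _ (Finset.sum_congr rfl fun n _ => ?_)
        rw [exp_freq q j hq hjq n]
      exact hoscj'.const_mul (b j)
    simpa using this
  exact hmain.congr fun N => (hswap N).symm

private lemma growth_bound (c : ℕ → ℂ) (hg : GrowthCondition c) :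
    ∃ C : ℝ, 0 < C ∧ ∀ N : ℕ, ∑ n ∈ Finset.Icc 1 N, ‖c n‖ ≤ C * N := by
  obtain ⟨lam, hlam, C, hC⟩ := hg
  refine ⟨|C| + 1, by positivity, fun N => ?_⟩
  have key : ∀ n : ℕ, ‖c n‖ ≤ ‖c n‖ ^ lam + 1 := by
    intro n
    rcases le_or_gt (‖c n‖) 1 with h1 | h1
    · have : (0:ℝ) ≤ ‖c n‖ ^ lam := Real.rpow_nonneg (norm_nonneg _) _
      linarith
    · have h3 : ‖c n‖ ≤ ‖c n‖ ^ lam := by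
        calc ‖c n‖ = ‖c n‖ ^ (1:ℝ) := (Real.rpow_one _).symm
          _ ≤ ‖c n‖ ^ lam :=
            Real.rpow_le_rpow_of_exponent_le h1.le hlam.le
      linarith
  calc ∑ n ∈ Finset.Icc 1 N, ‖c n‖
      ≤ ∑ n ∈ Finset.Icc 1 N, (‖c n‖ ^ lam + 1) :=
        Finset.sum_le_sum fun n _ => key n
    _ = (∑ n ∈ Finset.Icc 1 N, ‖c n‖ ^ lam) + N := by
        rw [Finset.sum_add_distrib]
        simp [Nat.card_Icc]
    _ ≤ C * N + N := by
        have := hC N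
        linarith
    _ ≤ (|C| + 1) * N := by
        have h4 : C ≤ |C| := le_abs_self C
        have h5 : (0:ℝ) ≤ N := Nat.cast_nonneg N
        nlinarith

/-- Polynomials over the `p`-adic integers define continuous self-maps of
the compact metric space `ℤ_p`, and every oscillating sequence satisfying the growth
condition is linearly disjoint from the resulting flow. -/
theorem oscillating_linearlyDisjoint_padic_polynomial
    (p : ℕ) [Fact p.Prime] (P : Polynomial ℤ_[p])
    (c : ℕ → ℂ) (hosc : Oscillating c) (hgrowth : GrowthCondition c) :
    Continuous (fun x : ℤ_[p] => P.eval x) ∧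
      LinearlyDisjoint c (fun x : ℤ_[p] => P.eval x) := by
  set T : ℤ_[p] → ℤ_[p] := fun x => P.eval x with hT
  have hlip : ∀ a b : ℤ_[p], dist (T a) (T b) ≤ dist a b := by
    intro a b
    obtain ⟨k, hk⟩ := Polynomial.sub_dvd_eval_sub a b P
    show dist (P.eval a) (P.eval b) ≤ dist a b
    rw [dist_eq_norm, dist_eq_norm, hk, norm_mul]
    calc ‖a - b‖ * ‖k‖ ≤ ‖a - b‖ * 1 :=
          mul_le_mul_of_nonneg_left k.2 (norm_nonneg _)
      _ = ‖a - b‖ := mul_one _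
  have hlipn : ∀ (n : ℕ) (a b : ℤ_[p]), dist (T^[n] a) (T^[n] b) ≤ dist a b := by
    intro n
    induction n with
    | zero => intro a b; simp
    | succ n ih =>
      intro a b
      rw [Function.iterate_succ_apply', Function.iterate_succ_apply']
      exact (hlip _ _).trans (ih a b)
  have hcont : Continuous T := by
    have : LipschitzWith 1 T := LipschitzWith.of_dist_le_mul fun a b => by
      rw [NNReal.coe_one, one_mul]; exact hlip a b
    exact this.continuous
  have ultra : ∀ a b c' : ℤ_[p], dist a c' ≤ max (dist a b) (dist b c') := by
    intro a b c'
    have hna := PadicInt.nonarchimedean (a - b) (b - c')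
    rw [sub_add_sub_cancel] at hna
    simpa [dist_eq_norm] using hna
  refine ⟨hcont, ?_⟩
  intro f x
  obtain ⟨C, hCpos, hC⟩ := growth_bound c hgrowth
  rw [Metric.tendsto_atTop]
  intro ε₀ hε₀
  set ε : ℝ := ε₀ / (4 * C) with hεdef
  have hε : 0 < ε := by positivity
  obtain ⟨δ, hδ, hf⟩ := Metric.uniformContinuous_iff.mp
    (CompactSpace.uniformContinuous_of_continuous f.continuous) ε hε
  -- pigeonhole: two close points on the orbit
  have hpigeon : ∃ m q : ℕ, 0 < q ∧ dist (T^[m + q] x) (T^[m] x) < δ := by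
    have hδ2 : 0 < δ / 2 := by positivity
    obtain ⟨t, htf, htc⟩ := Metric.totallyBounded_iff.mp
      ((isCompact_univ : IsCompact (Set.univ : Set ℤ_[p])).totallyBounded) (δ / 2) hδ2
    have hgex : ∀ n : ℕ, ∃ y, y ∈ t ∧ dist (T^[n] x) y < δ / 2 := by
      intro n
      have := htc (Set.mem_univ (T^[n] x))
      simpa [Metric.mem_ball] using this
    choose g hgt hgd using hgex
    haveI : Finite t := htf.to_subtype
    obtain ⟨i, i', hne, heq⟩ := Finite.exists_ne_map_eq_of_infinite
      (fun n : ℕ => (⟨g n, hgt n⟩ : t))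
    have hgg : g i = g i' := by
      simpa [Subtype.mk.injEq] using heq
    have hdd : dist (T^[max i i'] x) (T^[min i i'] x) < δ := by
      have t1 := hgd (max i i')
      have t2 := hgd (min i i')
      have hge : g (max i i') = g (min i i') := by
        rcases le_total i i' with hle | hle
        · rw [max_eq_right hle, min_eq_left hle]; exact hgg.symm
        · rw [max_eq_left hle, min_eq_right hle]; exact hgg
      calc dist (T^[max i i'] x) (T^[min i i'] x)
          ≤ dist (T^[max i i'] x) (g (max i i'))
            + dist (g (max i i')) (T^[min i i'] x) := dist_triangle _ _ _
        _ < δ / 2 + δ / 2 := by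
            refine add_lt_add t1 ?_
            rw [hge, dist_comm]
            exact t2
        _ = δ := by ring
    refine ⟨min i i', max i i' - min i i', ?_, ?_⟩
    · rcases hne.lt_or_gt with hlt | hlt <;> omega
    · have e5 : min i i' + (max i i' - min i i') = max i i' := by omega
      rw [e5]
      simpa using hdd
  obtain ⟨m, q, hq, hmq⟩ := hpigeon
  -- chain estimate (ultrametric)
  have chain : ∀ j : ℕ, dist (T^[m + j * q] x) (T^[m] x) < δ := by
    intro j
    induction j with
    | zero => simpa using hδ
    | succ j ih =>
      have w1 : T^[m + (j + 1) * q] x = T^[j * q] (T^[m + q] x) := by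
        rw [show m + (j + 1) * q = j * q + (m + q) from by ring]
        exact Function.iterate_add_apply T (j * q) (m + q) x
      have w2 : T^[m + j * q] x = T^[j * q] (T^[m] x) := by
        rw [show m + j * q = j * q + m from by ring]
        exact Function.iterate_add_apply T (j * q) m x
      have h1 : dist (T^[m + (j + 1) * q] x) (T^[m + j * q] x)
          ≤ dist (T^[m + q] x) (T^[m] x) := by
        rw [w1, w2]
        exact hlipn _ _ _
      exact lt_of_le_of_lt (ultra _ (T^[m + j * q] x) _)
        (max_lt (lt_of_le_of_lt h1 hmq) ih)
  -- the orbit is δ-close to an eventually periodic orbit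
  have happroxd : ∀ n : ℕ, m ≤ n → dist (T^[n] x) (T^[m + (n - m) % q] x) < δ := by
    intro n hn
    have hit : T^[n] x = T^[(n - m) % q] (T^[m + ((n - m) / q) * q] x) := by
      rw [← Function.iterate_add_apply]
      congr 1
      have e := Nat.div_add_mod (n - m) q
      have e' : ((n - m) / q) * q = q * ((n - m) / q) := by ring
      rw [e']
      generalize q * ((n - m) / q) = A at e ⊢
      omega
    have hit2 : T^[m + (n - m) % q] x = T^[(n - m) % q] (T^[m] x) := by
      rw [← Function.iterate_add_apply]
      congr 1
      omega
    rw [hit, hit2]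
    exact lt_of_le_of_lt (hlipn _ _ _) (chain _)
  -- the comparison periodic sequence
  set Q : ℕ := q * m with hQ
  have hQm : m ≤ Q := Nat.le_mul_of_pos_left m hq
  set h : ℕ → ℂ := fun n => f (T^[m + (n + Q - m) % q] x) with hh
  have hper : Function.Periodic h q := by
    intro n
    have e3 : n + q + Q - m = (n + Q - m) + q := by omega
    simp only [hh, e3, Nat.add_mod_right]
  have hmod : ∀ n : ℕ, m ≤ n → (n + Q - m) % q = (n - m) % q := by
    intro n hn
    have e4 : n + Q - m = (n - m) + Q := by omega
    rw [e4, show Q = m * q from by rw [hQ, mul_comm], Nat.add_mul_mod_self_right]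
  have happrox : ∀ n : ℕ, m ≤ n → ‖f (T^[n] x) - h n‖ ≤ ε := by
    intro n hn
    have h6 := hf (happroxd n hn)
    rw [Complex.dist_eq] at h6
    have h7 : h n = f (T^[m + (n - m) % q] x) := by
      rw [hh]
      simp only [hmod n hn]
    rw [h7]
    exact h6.le
  -- the periodic averages tend to zero
  have hB := periodic_avg_zero c hosc q hq h hper
  -- error control
  set K : ℝ := ∑ n ∈ Finset.Icc 1 m,
    ‖c n‖ * ‖f (T^[n] x) - h n‖ with hK
  have hK0 : 0 ≤ K := Finset.sum_nonneg fun n _ => by positivity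
  have hsum : ∀ N : ℕ,
      ∑ n ∈ Finset.Icc 1 N, ‖c n‖ * ‖f (T^[n] x) - h n‖
        ≤ K + ε * (C * N) := by
    intro N
    have step : ∀ n ∈ Finset.Icc 1 N,
        ‖c n‖ * ‖f (T^[n] x) - h n‖
          ≤ (if n ≤ m then ‖c n‖ * ‖f (T^[n] x) - h n‖ else 0)
            + ε * ‖c n‖ := by
      intro n _
      by_cases hnm : n ≤ m
      · rw [if_pos hnm]
        have : 0 ≤ ε * ‖c n‖ := by positivity
        linarith
      · rw [if_neg hnm]
        push_neg at hnm
        have h6 := happrox n hnm.le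
        calc ‖c n‖ * ‖f (T^[n] x) - h n‖
            ≤ ‖c n‖ * ε :=
              mul_le_mul_of_nonneg_left h6 (norm_nonneg _)
          _ = 0 + ε * ‖c n‖ := by ring
    calc ∑ n ∈ Finset.Icc 1 N, ‖c n‖ * ‖f (T^[n] x) - h n‖
        ≤ ∑ n ∈ Finset.Icc 1 N,
            ((if n ≤ m then ‖c n‖ * ‖f (T^[n] x) - h n‖ else 0)
              + ε * ‖c n‖) := Finset.sum_le_sum step
      _ = (∑ n ∈ Finset.Icc 1 N,
            if n ≤ m then ‖c n‖ * ‖f (T^[n] x) - h n‖ else 0)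
          + ε * ∑ n ∈ Finset.Icc 1 N, ‖c n‖ := by
          rw [Finset.sum_add_distrib, Finset.mul_sum]
      _ ≤ K + ε * (C * N) := by
          refine add_le_add ?_ ?_
          · rw [← Finset.sum_filter, hK]
            refine Finset.sum_le_sum_of_subset_of_nonneg ?_ ?_
            · intro a ha
              simp only [Finset.mem_filter, Finset.mem_Icc] at ha ⊢
              exact ⟨ha.1.1, ha.2⟩
            · intro n _ _
              positivity
          · exact mul_le_mul_of_nonneg_left (hC N) hε.le
  have habs : ∀ N : ℕ,
      ‖((N : ℂ)⁻¹ * ∑ n ∈ Finset.Icc 1 N, c n * f (T^[n] x))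
        - ((N : ℂ)⁻¹ * ∑ n ∈ Finset.Icc 1 N, c n * h n)‖
      ≤ (N : ℝ)⁻¹ * (K + ε * (C * N)) := by
    intro N
    rw [← mul_sub, ← Finset.sum_sub_distrib, norm_mul, norm_inv, Complex.norm_natCast]
    refine mul_le_mul_of_nonneg_left ?_ (by positivity)
    calc ‖∑ n ∈ Finset.Icc 1 N, (c n * f (T^[n] x) - c n * h n)‖
        ≤ ∑ n ∈ Finset.Icc 1 N, ‖c n * f (T^[n] x) - c n * h n‖ :=
          norm_sum_le _ _
      _ = ∑ n ∈ Finset.Icc 1 N, ‖c n‖ * ‖f (T^[n] x) - h n‖ := by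
          refine Finset.sum_congr rfl fun n _ => ?_
          rw [← mul_sub, norm_mul]
      _ ≤ K + ε * (C * N) := hsum N
  -- putting everything together
  have hKlim : Filter.Tendsto (fun N : ℕ => (N : ℝ)⁻¹ * K) Filter.atTop (nhds 0) := by
    simpa using (tendsto_inv_atTop_nhds_zero_nat : Tendsto (fun n : ℕ => (n : ℝ)⁻¹) atTop (𝓝 0)).mul_const K
  obtain ⟨N₁, hN₁⟩ := (Metric.tendsto_atTop.mp hB) (ε₀ / 4) (by positivity)
  obtain ⟨N₂, hN₂⟩ := (Metric.tendsto_atTop.mp hKlim) (ε₀ / 4) (by positivity)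
  refine ⟨max (max N₁ N₂) 1, fun N hN => ?_⟩
  have hN1 : N₁ ≤ N := le_trans (le_trans (le_max_left _ _) (le_max_left _ _)) hN
  have hN2 : N₂ ≤ N := le_trans (le_trans (le_max_right _ _) (le_max_left _ _)) hN
  have hN3 : 1 ≤ N := le_trans (le_max_right _ _) hN
  have hNr : (0 : ℝ) < N := by exact_mod_cast hN3
  have hBN := hN₁ N hN1
  have hKN := hN₂ N hN2
  rw [Real.dist_eq, sub_zero, abs_of_nonneg (by positivity)] at hKN
  rw [Complex.dist_eq, sub_zero] at hBN
  rw [Complex.dist_eq, sub_zero]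
  set A : ℂ := (N : ℂ)⁻¹ * ∑ n ∈ Finset.Icc 1 N, c n * f (T^[n] x) with hA
  set B : ℂ := (N : ℂ)⁻¹ * ∑ n ∈ Finset.Icc 1 N, c n * h n with hBdef
  have hsplit : ‖A‖ ≤ ‖A - B‖ + ‖B‖ := by
    simpa using norm_add_le (A - B) B
  have h7 := habs N
  have h8 : (N : ℝ)⁻¹ * (K + ε * (C * N)) = (N : ℝ)⁻¹ * K + ε * C := by
    field_simp
  have hC0 : C ≠ 0 := hCpos.ne'
  have hεC : ε * C = ε₀ / 4 := by
    rw [hεdef]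
    field_simp
  have h9 : ‖A - B‖ ≤ (N : ℝ)⁻¹ * K + ε₀ / 4 := by
    rw [← hεC, ← h8]
    exact h7
  linarith
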